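/- arXiv:0909.0165 — 2 statements merged into one kernel-verified Lean document; each statement's English description precedes it below -/
import Mathlib

section
/- Let x ∈ ℍⁿ and δ ∈ (0,1) with x_{2n+1} > 0 and √(x_{2n+1}) > δ‖x‖. Then for every y in the Korányi ball B(x, δ²‖x‖/(100n)), one has y_{2n+1} ≥ δ²‖x‖²/2. -/
open Filter Topology MeasureTheory
open scoped BigOperators ENNReal RealInnerProductSpace

noncomputable section

/-- The Heisenberg group `ℍⁿ`, identified with `ℝ^{2n} × ℝ`; the horizontal part is
`EuclideanSpace ℝ (Fin n ⊕ Fin n)` where index `Sum.inl i` corresponds to coordinate `i`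
(`1 ≤ i ≤ n` in the paper) and `Sum.inr i` to coordinate `n + i`. -/
abbrev H (n : ℕ) := EuclideanSpace ℝ (Fin n ⊕ Fin n) × ℝ

/-- `A(p,q) = -2 ∑ (p_i q_{n+i} - p_{n+i} q_i)`. -/
def A {n : ℕ} (p q : H n) : ℝ :=
  -2 * ∑ i : Fin n, (p.1 (Sum.inl i) * q.1 (Sum.inr i) - p.1 (Sum.inr i) * q.1 (Sum.inl i))

/-- The Heisenberg group operation. -/
def Hmul {n : ℕ} (p q : H n) : H n := (p.1 + q.1, p.2 + q.2 + A p q)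

/-- The Heisenberg inverse `p⁻¹ = -p`. -/
def Hinv {n : ℕ} (p : H n) : H n := (-p.1, -p.2)

/-- The dilations `δ_r`. -/
def dil {n : ℕ} (r : ℝ) (p : H n) : H n := (r • p.1, r ^ 2 * p.2)

/-- The Korányi Kgauge. -/
def Kgauge {n : ℕ} (p : H n) : ℝ := (‖p.1‖ ^ 4 + p.2 ^ 2) ^ ((1 : ℝ) / 4)

/-- The Korányi metric `d(p,q) = ‖p⁻¹·q‖`. -/
def hdist {n : ℕ} (p q : H n) : ℝ := Kgauge (Hmul (Hinv p) q)

/-- Closed balls in the Korányi metric. -/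
def Kball {n : ℕ} (p : H n) (r : ℝ) : Set (H n) := {q | hdist p q ≤ r}


lemma Kgauge_nonneg {n : ℕ} (p : H n) : 0 ≤ Kgauge p :=
  Real.rpow_nonneg (by positivity) _

lemma Kgauge_pow {n : ℕ} (p : H n) : Kgauge p ^ (4:ℕ) = ‖p.1‖ ^ 4 + p.2 ^ 2 := by
  rw [Kgauge, ← Real.rpow_natCast (_ ^ ((1:ℝ)/4)) 4, ← Real.rpow_mul (by positivity)]
  norm_num

lemma horiz_le {n : ℕ} (p : H n) : ‖p.1‖ ≤ Kgauge p := by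
  have h4 : ‖p.1‖ ^ (4:ℕ) ≤ Kgauge p ^ (4:ℕ) := by
    rw [Kgauge_pow]; nlinarith [sq_nonneg p.2]
  exact le_of_pow_le_pow_left₀ (by norm_num) (Kgauge_nonneg p) h4

lemma vert_le {n : ℕ} (p : H n) : |p.2| ≤ Kgauge p ^ 2 := by
  have h4 : p.2 ^ 2 ≤ (Kgauge p ^ 2) ^ 2 := by
    have := Kgauge_pow p; nlinarith [pow_nonneg (norm_nonneg p.1) 4]
  exact abs_le.mpr (abs_le_of_sq_le_sq' h4 (by positivity))

lemma A_bound {n : ℕ} (p q : H n) : |A p q| ≤ 2 * ‖p.1‖ * ‖q.1‖ := by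
  classical
  set w : EuclideanSpace ℝ (Fin n ⊕ Fin n) :=
    WithLp.toLp 2 (fun j => Sum.elim (fun i => q.1 (Sum.inr i)) (fun i => -(q.1 (Sum.inl i))) j) with hw
  have hinner : ⟪p.1, w⟫ =
      ∑ i : Fin n, (p.1 (Sum.inl i) * q.1 (Sum.inr i) - p.1 (Sum.inr i) * q.1 (Sum.inl i)) := by
    simp [PiLp.inner_apply, RCLike.inner_apply, Fintype.sum_sum_type, hw,
      Finset.sum_sub_distrib, mul_comm, sub_eq_add_neg]
    rw [Finset.sum_add_distrib, Finset.sum_neg_distrib]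
  have hnorm : ‖w‖ = ‖q.1‖ := by
    rw [EuclideanSpace.norm_eq, EuclideanSpace.norm_eq]
    congr 1
    rw [Fintype.sum_sum_type, Fintype.sum_sum_type]
    simp [hw, add_comm]
  have habs : |A p q| = 2 * |∑ i : Fin n, (p.1 (Sum.inl i) * q.1 (Sum.inr i) -
      p.1 (Sum.inr i) * q.1 (Sum.inl i))| := by
    rw [A, abs_mul]; norm_num
  have key := abs_real_inner_le_norm p.1 w
  rw [hinner, hnorm] at key
  rw [habs]
  linarith

lemma final_arith (δ K s t u a : ℝ) (hδ0 : 0 < δ) (hδ1 : δ < 1) (hK : 0 ≤ K)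
    (hs : 0 ≤ s) (hsr : s ≤ δ ^ 2 * K / 100) (ht : δ ^ 2 * K ^ 2 < t)
    (hu : -(s ^ 2) ≤ u) (ha : -(2 * K * s) ≤ a) :
    δ ^ 2 * K ^ 2 / 2 ≤ t + u + a := by
  nlinarith [mul_le_mul hsr hsr hs (by positivity : (0:ℝ) ≤ δ ^ 2 * K / 100),
    mul_le_mul_of_nonneg_left hsr (by positivity : (0:ℝ) ≤ 2 * K),
    mul_le_mul_of_nonneg_right (by nlinarith : δ ^ 2 ≤ 1)
      (by positivity : (0:ℝ) ≤ δ ^ 2 * K ^ 2)]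

/-- Lemma 3.5 of the paper: if `x_{2n+1} > 0` and `√(x_{2n+1}) > δ‖x‖`,
then every `y` in the Korányi ball `B(x, δ²‖x‖/(100n))` satisfies `y_{2n+1} ≥ δ²‖x‖²/2`. -/
theorem vertical_coordinate_lower_bound (n : ℕ) (hn : 0 < n) (x : H n) (δ : ℝ)
    (hδ : δ ∈ Set.Ioo (0 : ℝ) 1) (hx : 0 < x.2)
    (hsqrt : δ * Kgauge x < Real.sqrt x.2) :
    ∀ y ∈ Kball x (δ ^ 2 * Kgauge x / (100 * n)), δ ^ 2 * Kgauge x ^ 2 / 2 ≤ y.2 := by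
  intro y hy
  have hK : 0 ≤ Kgauge x := Kgauge_nonneg x
  obtain ⟨z, hzdef⟩ : ∃ z : H n, z = Hmul (Hinv x) y := ⟨_, rfl⟩
  have hs0 : 0 ≤ Kgauge z := Kgauge_nonneg z
  have hsr : Kgauge z ≤ δ ^ 2 * Kgauge x / (100 * n) := by
    rw [hzdef]; exact hy
  have hz2 : |z.2| ≤ Kgauge z ^ 2 := vert_le z
  have hA : |A x z| ≤ 2 * ‖x.1‖ * ‖z.1‖ := A_bound x z
  have hx1 : ‖x.1‖ ≤ Kgauge x := horiz_le x
  have hz1 : ‖z.1‖ ≤ Kgauge z := horiz_le z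
  have hzj : ∀ j, z.1 j = -x.1 j + y.1 j := by
    intro j; simp [hzdef, Hmul, Hinv, PiLp.add_apply, PiLp.neg_apply]
  have hz2eq : z.2 = -x.2 + y.2 + A (Hinv x) y := by
    simp [hzdef, Hmul, Hinv]
  have hAA : A x z + A (Hinv x) y = 0 := by
    simp only [A, Hinv, Pi.neg_apply, ← mul_add, ← Finset.sum_add_distrib]
    rw [Finset.sum_eq_zero, mul_zero]
    intro i _
    rw [hzj (Sum.inl i), hzj (Sum.inr i)]
    simp only [PiLp.neg_apply]
    ring
  have hy2 : y.2 = x.2 + z.2 + A x z := by linarith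
  have hx2 : δ ^ 2 * Kgauge x ^ 2 < x.2 := by
    nlinarith [Real.sq_sqrt hx.le, hsqrt, mul_nonneg hδ.1.le hK, Real.sqrt_nonneg x.2]
  have hn1 : (1 : ℝ) ≤ (n : ℝ) := by exact_mod_cast hn
  have hsr' : Kgauge z ≤ δ ^ 2 * Kgauge x / 100 := by
    have h100 : δ ^ 2 * Kgauge x / (100 * n) ≤ δ ^ 2 * Kgauge x / 100 := by
      gcongr
      · linarith
    linarith
  have hz2' : -(Kgauge z ^ 2) ≤ z.2 := by
    have := neg_abs_le z.2; linarith
  have hA' : -(2 * Kgauge x * Kgauge z) ≤ A x z := by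
    have h1 := neg_abs_le (A x z)
    have h2 : 2 * ‖x.1‖ * ‖z.1‖ ≤ 2 * Kgauge x * Kgauge z := by
      nlinarith [norm_nonneg x.1, norm_nonneg z.1]
    linarith
  rw [hy2]
  exact final_arith δ (Kgauge x) (Kgauge z) x.2 z.2 (A x z) hδ.1 hδ.2 hK hs0 hsr' hx2 hz2' hA'
end
end

section
/- Let c ∈ 𝕋 (i.e. c' = 0), c_{2n+1} ≠ 0, r = d(0,c) = √|c_{2n+1}|, and let (p_i) and r_i → 0⁺ satisfy d(p_i, c) ≥ r, p_i → 0, and δ_{1/r_i}(p_i) → p_*. Then c_{2n+1}·p_{*,2n+1} ≤ 0. -/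
open Filter Topology MeasureTheory
open scoped BigOperators ENNReal RealInnerProductSpace

noncomputable section

/-- Lemma 3.4, case `c ∈ 𝕋`: for `c` in the center with `c_{2n+1} ≠ 0`
and `r = d(0,c) = √|c_{2n+1}|`, blow-ups of points outside `B(c,r)` converging to `0`
satisfy `c_{2n+1} · p_{*,2n+1} ≤ 0`. -/
theorem boundary_blowup_halfspace_vertical (n : ℕ)
    (c : H n) (hc1 : c.1 = 0) (hc2 : c.2 ≠ 0)
    (r : ℝ) (hcr : hdist 0 c = r) (hrs : r = Real.sqrt |c.2|)
    (p : ℕ → H n) (hpd : ∀ i, r ≤ hdist (p i) c) (hp0 : Tendsto p atTop (𝓝 0))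
    (ri : ℕ → ℝ) (hripos : ∀ i, 0 < ri i) (hri : Tendsto ri atTop (𝓝 0))
    (pstar : H n)
    (hconv : Tendsto (fun i => dil (1 / ri i) (p i)) atTop (𝓝 pstar)) :
    c.2 * pstar.2 ≤ 0 := by
  set q : ℕ → H n := fun i => dil (1 / ri i) (p i) with hq
  have hr0 : 0 ≤ r := hrs ▸ Real.sqrt_nonneg _
  have hr4 : r ^ 4 = c.2 ^ 2 := by
    rw [hrs]
    have : (Real.sqrt |c.2|) ^ 4 = ((Real.sqrt |c.2|) ^ 2) ^ 2 := by ring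
    rw [this, Real.sq_sqrt (abs_nonneg _), sq_abs]
  have hkey : ∀ i, c.2 * (q i).2 ≤ (ri i) ^ 2 * (‖(q i).1‖ ^ 4 + (q i).2 ^ 2) / 2 := by
    intro i
    have hri' := hripos i
    have hrine : ri i ≠ 0 := ne_of_gt hri'
    have hA : A (-(p i).1, -(p i).2) c = 0 := by
      simp [A, hc1]
    have hd : hdist (p i) c = (‖(p i).1‖ ^ 4 + (c.2 - (p i).2) ^ 2) ^ ((1 : ℝ) / 4) := by
      have h1 : ‖(-(p i).1 + c.1 : EuclideanSpace ℝ (Fin n ⊕ Fin n))‖ = ‖(p i).1‖ := by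
        rw [hc1]; simp
      simp only [hdist, Kgauge, Hmul, Hinv, hA, h1]
      ring_nf
    have hX0 : (0 : ℝ) ≤ ‖(p i).1‖ ^ 4 + (c.2 - (p i).2) ^ 2 := by positivity
    have hXle : c.2 ^ 2 ≤ ‖(p i).1‖ ^ 4 + (c.2 - (p i).2) ^ 2 := by
      have h1 : r ≤ (‖(p i).1‖ ^ 4 + (c.2 - (p i).2) ^ 2) ^ ((1 : ℝ) / 4) := hd ▸ hpd i
      have h2 : r ^ 4 ≤ ((‖(p i).1‖ ^ 4 + (c.2 - (p i).2) ^ 2) ^ ((1 : ℝ) / 4)) ^ 4 :=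
        pow_le_pow_left₀ hr0 h1 4
      calc c.2 ^ 2 = r ^ 4 := hr4.symm
        _ ≤ _ := h2
        _ = ‖(p i).1‖ ^ 4 + (c.2 - (p i).2) ^ 2 := by
            rw [← Real.rpow_natCast (_ ^ ((1:ℝ)/4)) 4, ← Real.rpow_mul hX0]
            norm_num
    have hq2 : (q i).2 = (1 / ri i) ^ 2 * (p i).2 := rfl
    have hq1 : ‖(q i).1‖ = (1 / ri i) * ‖(p i).1‖ := by
      show ‖(1 / ri i) • (p i).1‖ = _
      rw [norm_smul, Real.norm_eq_abs, abs_of_pos (by positivity)]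
    rw [hq2, hq1]
    have h2c : 2 * c.2 * (p i).2 ≤ ‖(p i).1‖ ^ 4 + (p i).2 ^ 2 := by nlinarith [hXle]
    have e : ri i ^ 2 * ((1 / ri i * ‖(p i).1‖) ^ 4 + ((1 / ri i) ^ 2 * (p i).2) ^ 2) / 2
        = (‖(p i).1‖ ^ 4 + (p i).2 ^ 2) / (2 * ri i ^ 2) := by
      field_simp
    rw [e, le_div_iff₀ (by positivity)]
    have e2 : c.2 * ((1 / ri i) ^ 2 * (p i).2) * (2 * ri i ^ 2) = 2 * c.2 * (p i).2 := by
      field_simp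
    rw [e2]
    exact h2c
  have hL : Tendsto (fun i => c.2 * (q i).2) atTop (𝓝 (c.2 * pstar.2)) :=
    ((continuous_snd.tendsto pstar).comp hconv).const_mul _
  have hR : Tendsto (fun i => (ri i) ^ 2 * (‖(q i).1‖ ^ 4 + (q i).2 ^ 2) / 2) atTop
      (𝓝 (0 ^ 2 * (‖pstar.1‖ ^ 4 + pstar.2 ^ 2) / 2)) := by
    apply Tendsto.div_const
    exact (hri.pow 2).mul
      ((((continuous_fst.tendsto pstar).comp hconv).norm.pow 4).add
        (((continuous_snd.tendsto pstar).comp hconv).pow 2))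
  have hR' : Tendsto (fun i => (ri i) ^ 2 * (‖(q i).1‖ ^ 4 + (q i).2 ^ 2) / 2) atTop (𝓝 0) := by
    simpa using hR
  exact le_of_tendsto_of_tendsto' hL hR' hkey
end
end
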